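/- Let t(x) = (1 + x − √(1 − 6x + x²))/(4x) (the generating function of the little Schröder numbers) and B(x) = (3 − x − √(1 − 6x + x²))/2 (the generating function of the large Schröder numbers). Then B(x) = 1/(1 − x·t(x)), and t satisfies t²x + (t−1)x·C* − (t−1) = 0 where C* = C(x/(1 − tx)) and C(y) = (1 − √(1−4y))/(2y) is the Catalan generating function. -/

import Mathlib

/-- `B(x) = (3 - x - √(1 - 6x + x²))/2`, the large Schröder generating function. -/
noncomputable def Bfun (x : ℝ) : ℝ := (3 - x - Real.sqrt (1 - 6 * x + x ^ 2)) / 2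

/-- `t(x) = (1 + x - √(1 - 6x + x²))/(4x)`, the little Schröder generating function. -/
noncomputable def tfun (x : ℝ) : ℝ := (1 + x - Real.sqrt (1 - 6 * x + x ^ 2)) / (4 * x)

/-- The Catalan generating function `C(y) = (1 - √(1-4y))/(2y)`. -/
noncomputable def Cfun (y : ℝ) : ℝ := (1 - Real.sqrt (1 - 4 * y)) / (2 * y)

theorem stmt16 (x : ℝ) (h0 : 0 < x) (h1 : x < 3 - 2 * Real.sqrt 2) :
    Bfun x = 1 / (1 - x * tfun x) ∧
    tfun x ^ 2 * x + (tfun x - 1) * x * Cfun (x / (1 - tfun x * x)) - (tfun x - 1) = 0 := by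
  have ha : Real.sqrt 2 ^ 2 = 2 := Real.sq_sqrt (by norm_num)
  have ha1 : (1:ℝ) ≤ Real.sqrt 2 := by nlinarith [Real.sqrt_nonneg 2]
  have hx1 : x < 1 := by nlinarith
  have hdisc : (0:ℝ) ≤ 1 - 6 * x + x ^ 2 := by nlinarith [Real.sqrt_nonneg 2]
  set s := Real.sqrt (1 - 6 * x + x ^ 2) with hsdef
  have hs2 : s ^ 2 = 1 - 6 * x + x ^ 2 := Real.sq_sqrt hdisc
  have hsnn : 0 ≤ s := Real.sqrt_nonneg _
  have hxne : x ≠ 0 := ne_of_gt h0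
  have htx : 1 - tfun x * x = (3 - x + s) / 4 := by
    unfold tfun; rw [← hsdef]; field_simp; ring
  have hden : 0 < 3 - x + s := by nlinarith
  have hdne : (3 - x + s) ≠ 0 := ne_of_gt hden
  have hy : x / (1 - tfun x * x) = 4 * x / (3 - x + s) := by
    rw [htx]; field_simp
  have hsqarg : 1 - 4 * (4 * x / (3 - x + s)) = (x + s) ^ 2 := by
    field_simp
    linear_combination (-(3 + x + s)) * hs2
  have hsqrt : Real.sqrt (1 - 4 * (4 * x / (3 - x + s))) = x + s := by
    rw [hsqarg]; exact Real.sqrt_sq (by positivity)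
  constructor
  · unfold Bfun
    rw [mul_comm x (tfun x), htx, ← hsdef]
    rw [div_eq_div_iff (by norm_num) (by positivity)]
    linear_combination (-1/4) * hs2
  · unfold Cfun
    rw [hy, hsqrt]
    unfold tfun
    rw [← hsdef]
    have h4x : (4:ℝ) * x ≠ 0 := by positivity
    field_simp
    linear_combination (3+3*x+s) * hs2
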